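/- arXiv:1210.0705 — 2 statements merged into one kernel-verified Lean document; each statement's English description precedes it below -/
import Mathlib

section
/- Let 0 < α < 1 and f be continuously differentiable on [a,b]. Then (aJ^α_b (ᶜaD^α f)) = f(b) - f(a), i.e., (1/Γ(α)) ∫_a^b (ᶜaD^α_x f)(x) (b-x)^{α-1} dx = f(b) - f(a). -/
open MeasureTheory intervalIntegral Real Set

/-- The left Caputo fractional derivative of order `α ∈ (0,1)`. -/
noncomputable def leftCaputo (α a : ℝ) (f : ℝ → ℝ) (x : ℝ) : ℝ :=
  (1 / Real.Gamma (1 - α)) * ∫ u in a..x, deriv f u * (x - u) ^ (-α)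

lemma betaReal {α : ℝ} (h0 : 0 < α) (h1 : α < 1) :
    ∫ t in (0:ℝ)..1, t ^ (-α) * (1 - t) ^ (α - 1) = Real.Gamma (1 - α) * Real.Gamma α := by
  have hs : 0 < Complex.re ((1:ℝ) - α : ℝ) := by simpa using by linarith
  have ht : 0 < Complex.re (α : ℂ) := by simpa using h0
  have h := Complex.Gamma_mul_Gamma_eq_betaIntegral (s := ((1 - α : ℝ) : ℂ)) (t := (α : ℂ)) hs ht
  have hsum : ((1 - α : ℝ) : ℂ) + (α : ℂ) = 1 := by push_cast; ring
  rw [hsum, Complex.Gamma_one, one_mul] at h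
  have hbeta : Complex.betaIntegral ((1 - α : ℝ) : ℂ) (α : ℂ)
      = ((∫ t in (0:ℝ)..1, t ^ (-α) * (1 - t) ^ (α - 1) : ℝ) : ℂ) := by
    rw [Complex.betaIntegral, ← intervalIntegral.integral_ofReal]
    refine intervalIntegral.integral_congr fun x hx => ?_
    rw [uIcc_of_le zero_le_one] at hx
    push_cast
    rw [Complex.ofReal_cpow hx.1 (-α),
      Complex.ofReal_cpow (by linarith [hx.2] : (0:ℝ) ≤ 1 - x) (α - 1)]
    push_cast
    ring_nf
  rw [hbeta, Complex.Gamma_ofReal, Complex.Gamma_ofReal, ← Complex.ofReal_mul] at h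
  exact_mod_cast h.symm

lemma betaInterval {α : ℝ} (h0 : 0 < α) (h1 : α < 1) {c d : ℝ} (hcd : c < d) :
    (∫ x in c..d, (x - c) ^ (-α) * (d - x) ^ (α - 1))
      = ∫ t in (0:ℝ)..1, t ^ (-α) * (1 - t) ^ (α - 1) := by
  have hL : (0:ℝ) < d - c := sub_pos.mpr hcd
  have step1 : (∫ x in c..d, (x - c) ^ (-α) * (d - x) ^ (α - 1))
      = ∫ y in (0:ℝ)..(d - c), y ^ (-α) * (d - c - y) ^ (α - 1) := by
    have h := intervalIntegral.integral_comp_add_right (a := (0:ℝ)) (b := d - c)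
      (fun x => (x - c) ^ (-α) * (d - x) ^ (α - 1)) c
    simp only [zero_add, sub_add_cancel, add_sub_cancel_right] at h
    rw [← h]
    refine intervalIntegral.integral_congr fun y hy => ?_
    have : d - (y + c) = d - c - y := by ring
    rw [this]
  have step2 : (∫ t in (0:ℝ)..1, (fun y => y ^ (-α) * (d - c - y) ^ (α - 1)) ((d - c) * t))
      = (d - c)⁻¹ • ∫ y in (0:ℝ)..(d - c), y ^ (-α) * (d - c - y) ^ (α - 1) := by
    have h := intervalIntegral.integral_comp_mul_left (a := (0:ℝ)) (b := 1)
      (fun y => y ^ (-α) * (d - c - y) ^ (α - 1)) (ne_of_gt hL)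
    simpa using h
  have step3 : (∫ t in (0:ℝ)..1, (fun y => y ^ (-α) * (d - c - y) ^ (α - 1)) ((d - c) * t))
      = (d - c)⁻¹ * ∫ t in (0:ℝ)..1, t ^ (-α) * (1 - t) ^ (α - 1) := by
    rw [← intervalIntegral.integral_const_mul]
    refine intervalIntegral.integral_congr fun t ht => ?_
    rw [uIcc_of_le zero_le_one] at ht
    simp only
    have h1t : (0:ℝ) ≤ 1 - t := by linarith [ht.2]
    have e1 : d - c - (d - c) * t = (d - c) * (1 - t) := by ring
    rw [e1, Real.mul_rpow hL.le ht.1, Real.mul_rpow hL.le h1t, ← Real.rpow_neg_one (d - c)]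
    have e2 : (d - c) ^ (-α) * (d - c) ^ (α - 1) = (d - c) ^ (-1 : ℝ) := by
      rw [← Real.rpow_add hL]; congr 1; ring
    linear_combination (t ^ (-α) * (1 - t) ^ (α - 1)) * e2
  rw [step1]
  have := step2.symm.trans step3
  rw [smul_eq_mul] at this
  exact mul_left_cancel₀ (inv_ne_zero (ne_of_gt hL)) this

/-- Fundamental theorem of Caputo fractional calculus:
`(1/Γ(α)) ∫_a^b (ᶜaD^α_x f)(x) (b-x)^{α-1} dx = f(b) - f(a)`. -/
theorem caputo_FTC (α a b : ℝ) (hα₀ : 0 < α) (hα₁ : α < 1) (hab : a < b)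
    (f : ℝ → ℝ)
    (hdiff : ∀ x ∈ Set.Icc a b, HasDerivAt f (deriv f x) x)
    (hcont : ContinuousOn (deriv f) (Set.Icc a b)) :
    (1 / Real.Gamma α) * (∫ x in a..b, leftCaputo α a f x * (b - x) ^ (α - 1))
      = f b - f a := by
  obtain ⟨M, hM⟩ := (isCompact_Icc (a := a) (b := b)).exists_bound_of_continuousOn hcont
  have hM0 : 0 ≤ M := le_trans (norm_nonneg _) (hM a ⟨le_refl a, hab.le⟩)
  set μ := volume.restrict (Ioo a b) with hμ
  set h : ℝ → ℝ → ℝ := fun x u => deriv f u * (x - u) ^ (-α) * (b - x) ^ (α - 1) with hh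
  set F : ℝ → ℝ → ℝ := fun x u => (Ioo a x).indicator (h x) u with hF
  -- beta value on a general interval
  have hβ : ∀ {c d : ℝ}, c < d →
      (∫ x in c..d, (x - c) ^ (-α) * (d - x) ^ (α - 1))
        = Real.Gamma (1 - α) * Real.Gamma α :=
    fun hcd => (betaInterval hα₀ hα₁ hcd).trans (betaReal hα₀ hα₁)
  -- basic interval integrability of the kernel
  have hbase : ∀ x : ℝ, IntervalIntegrable (fun u => (x - u) ^ (-α)) volume a x := by
    intro x
    have h1 : IntervalIntegrable (fun s : ℝ => s ^ (-α)) volume 0 (x - a) :=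
      intervalIntegrable_rpow' (by linarith)
    have h2 := h1.comp_sub_left x
    simpa using h2.symm
  have hx_int : ∀ x : ℝ, IntervalIntegrable (fun u => deriv f u * (x - u) ^ (-α)) volume a x →
      True := fun _ _ => trivial
  have hmix : ∀ x ∈ Ioo a b,
      IntervalIntegrable (fun u => deriv f u * (x - u) ^ (-α)) volume a x := by
    intro x hx
    refine (hbase x).continuousOn_mul (hcont.mono ?_)
    rw [uIcc_of_le hx.1.le]
    exact Icc_subset_Icc le_rfl hx.2.le
  have hIOO : ∀ x ∈ Ioo a b, IntegrableOn (h x) (Ioo a x) volume := by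
    intro x hx
    have := (hmix x hx).mul_const ((b - x) ^ (α - 1))
    rw [intervalIntegrable_iff_integrableOn_Ioo_of_le hx.1.le] at this
    exact this
  -- measurability of uncurry F
  have hFm : AEStronglyMeasurable (Function.uncurry F) (μ.prod μ) := by
    set G : ℝ × ℝ → ℝ := fun p =>
      ({p : ℝ × ℝ | a < p.2 ∧ p.2 < p.1 ∧ p.1 < b}).indicator
        (fun p => deriv f p.2 * Real.exp (Real.log (p.1 - p.2) * (-α)) *
          Real.exp (Real.log (b - p.1) * (α - 1))) p with hG
    have hSm : MeasurableSet {p : ℝ × ℝ | a < p.2 ∧ p.2 < p.1 ∧ p.1 < b} := by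
      refine (measurableSet_lt measurable_const measurable_snd).inter
        ((measurableSet_lt measurable_snd measurable_fst).inter
          (measurableSet_lt measurable_fst measurable_const))
    have hGm : Measurable G := by
      refine Measurable.indicator ?_ hSm
      exact (((measurable_deriv f).comp measurable_snd).mul
        (((Real.measurable_log.comp (measurable_fst.sub measurable_snd)).mul
          measurable_const).exp)).mul
        (((Real.measurable_log.comp (measurable_const.sub measurable_fst)).mul
          measurable_const).exp)
    have hae : Function.uncurry F =ᵐ[μ.prod μ] G := by
      rw [hμ, Measure.prod_restrict]
      filter_upwards [ae_restrict_mem (measurableSet_Ioo.prod measurableSet_Ioo)] with p hp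
      obtain ⟨hp1, hp2⟩ := hp
      by_cases hc : a < p.2 ∧ p.2 < p.1
      · have hmem : p ∈ {p : ℝ × ℝ | a < p.2 ∧ p.2 < p.1 ∧ p.1 < b} :=
          ⟨hc.1, hc.2, hp1.2⟩
        have hmem2 : p.2 ∈ Ioo a p.1 := ⟨hc.1, hc.2⟩
        simp only [Function.uncurry, hF, hG, Set.indicator_of_mem hmem2,
          Set.indicator_of_mem hmem, hh]
        rw [Real.rpow_def_of_pos (by linarith [hc.2] : (0:ℝ) < p.1 - p.2),
          Real.rpow_def_of_pos (by linarith [hp1.2] : (0:ℝ) < b - p.1)]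
      · have hmem : p ∉ {p : ℝ × ℝ | a < p.2 ∧ p.2 < p.1 ∧ p.1 < b} := by
          intro hmm; exact hc ⟨hmm.1, hmm.2.1⟩
        have hmem2 : p.2 ∉ Ioo a p.1 := by
          intro hmm; exact hc ⟨hmm.1, hmm.2⟩
        simp only [Function.uncurry, hF, hG, Set.indicator_of_notMem hmem2,
          Set.indicator_of_notMem hmem]
    exact hGm.aestronglyMeasurable.congr hae.symm
  -- a.e. integrability of sections
  have hFx : ∀ x ∈ Ioo a b, Integrable (F x) μ := by
    intro x hx
    rw [hμ, hF]
    simp only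
    rw [integrable_indicator_iff measurableSet_Ioo, IntegrableOn,
      Measure.restrict_restrict measurableSet_Ioo,
      Set.inter_eq_self_of_subset_left (Ioo_subset_Ioo_right hx.2.le)]
    exact hIOO x hx
  -- closed form for the inner kernel integral
  have hprim : ∀ x : ℝ, a < x →
      (∫ u in a..x, (x - u) ^ (-α)) = (x - a) ^ (1 - α) / (1 - α) := by
    intro x hx
    rw [intervalIntegral.integral_comp_sub_left (fun s => s ^ (-α)) x, sub_self]
    rw [integral_rpow (Or.inl (by linarith))]
    rw [Real.zero_rpow (by intro hc; nlinarith : -α + 1 ≠ 0)]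
    rw [show -α + 1 = 1 - α by ring]
    ring
  -- the inner integral in u, for x ∈ Ioo a b
  have hinner : ∀ x ∈ Ioo a b, (∫ u, F x u ∂μ) = ∫ u in a..x, h x u := by
    intro x hx
    rw [hμ, hF]
    simp only
    rw [MeasureTheory.integral_indicator measurableSet_Ioo,
      Measure.restrict_restrict measurableSet_Ioo,
      Set.inter_eq_self_of_subset_left (Ioo_subset_Ioo_right hx.2.le),
      intervalIntegral.integral_of_le hx.1.le, integral_Ioc_eq_integral_Ioo]
  -- integrability of the norm integrals
  have hnorm : Integrable (fun x => ∫ u, ‖F x u‖ ∂μ) μ := by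
    have hmaj : Integrable (fun x => (M * ((b - a) ^ (1 - α) / (1 - α))) * (b - x) ^ (α - 1)) μ := by
      have h1 : IntervalIntegrable (fun s : ℝ => s ^ (α - 1)) volume 0 (b - a) :=
        intervalIntegrable_rpow' (by linarith)
      have h2 := h1.comp_sub_left b
      have h3 : IntervalIntegrable (fun x => (b - x) ^ (α - 1)) volume a b := by
        simpa using h2.symm
      have h4 := h3.const_mul (M * ((b - a) ^ (1 - α) / (1 - α)))
      rwa [intervalIntegrable_iff_integrableOn_Ioo_of_le hab.le] at h4
    refine Integrable.mono' hmaj (hFm.norm.integral_prod_right') ?_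
    rw [hμ]
    filter_upwards [ae_restrict_mem measurableSet_Ioo] with x hx
    have hbx : (0:ℝ) < b - x := by linarith [hx.2]
    have hxa : (0:ℝ) < x - a := by linarith [hx.1]
    have hnn : (0:ℝ) ≤ ∫ u, ‖F x u‖ ∂μ := integral_nonneg fun u => norm_nonneg _
    rw [Real.norm_of_nonneg hnn]
    -- rewrite the norm integral as a set integral over Ioo a x
    have hre : (∫ u, ‖F x u‖ ∂μ) = ∫ u in Ioo a x, ‖h x u‖ := by
      rw [hμ]
      have : (fun u => ‖F x u‖) = (Ioo a x).indicator (fun u => ‖h x u‖) := by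
        funext u
        rw [hF]
        simp only
        rw [norm_indicator_eq_indicator_norm]
      rw [this, MeasureTheory.integral_indicator measurableSet_Ioo,
        Measure.restrict_restrict measurableSet_Ioo,
        Set.inter_eq_self_of_subset_left (Ioo_subset_Ioo_right hx.2.le)]
    rw [hre]
    have hint2 : IntegrableOn (fun u => M * (x - u) ^ (-α) * (b - x) ^ (α - 1)) (Ioo a x) := by
      have := (((hbase x).const_mul M).mul_const ((b - x) ^ (α - 1)))
      rwa [intervalIntegrable_iff_integrableOn_Ioo_of_le hx.1.le] at this
    have hbound : ∀ u ∈ Ioo a x, ‖h x u‖ ≤ M * (x - u) ^ (-α) * (b - x) ^ (α - 1) := by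
      intro u hu
      have hxu : (0:ℝ) < x - u := by linarith [hu.2]
      rw [hh]
      simp only
      rw [norm_mul, norm_mul, Real.norm_of_nonneg (Real.rpow_nonneg hxu.le _),
        Real.norm_of_nonneg (Real.rpow_nonneg hbx.le _)]
      have hMu : ‖deriv f u‖ ≤ M := hM u ⟨hu.1.le, by linarith [hu.2, hx.2]⟩
      have := mul_le_mul_of_nonneg_right hMu (Real.rpow_nonneg hxu.le (-α))
      exact mul_le_mul_of_nonneg_right this (Real.rpow_nonneg hbx.le _)
    calc (∫ u in Ioo a x, ‖h x u‖)
        ≤ ∫ u in Ioo a x, M * (x - u) ^ (-α) * (b - x) ^ (α - 1) :=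
          setIntegral_mono_on ((hIOO x hx).norm) hint2 measurableSet_Ioo hbound
      _ = M * (b - x) ^ (α - 1) * ((x - a) ^ (1 - α) / (1 - α)) := by
          rw [← integral_Ioc_eq_integral_Ioo, ← intervalIntegral.integral_of_le hx.1.le]
          have : (∫ u in a..x, M * (x - u) ^ (-α) * (b - x) ^ (α - 1))
              = M * (b - x) ^ (α - 1) * ∫ u in a..x, (x - u) ^ (-α) := by
            rw [← intervalIntegral.integral_const_mul]
            refine intervalIntegral.integral_congr fun u hu => ?_
            ring
          rw [this, hprim x hx.1]
      _ ≤ M * ((b - a) ^ (1 - α) / (1 - α)) * (b - x) ^ (α - 1) := by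
          have hle : (x - a) ^ (1 - α) ≤ (b - a) ^ (1 - α) :=
            Real.rpow_le_rpow hxa.le (by linarith [hx.2]) (by linarith)
          have h1 : (0:ℝ) ≤ (b - x) ^ (α - 1) := Real.rpow_nonneg hbx.le _
          have h2 : (0:ℝ) < 1 - α := by linarith
          calc M * (b - x) ^ (α - 1) * ((x - a) ^ (1 - α) / (1 - α))
              ≤ M * (b - x) ^ (α - 1) * ((b - a) ^ (1 - α) / (1 - α)) := by
                gcongr
            _ = M * ((b - a) ^ (1 - α) / (1 - α)) * (b - x) ^ (α - 1) := by ring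
  -- Fubini
  have hInt : Integrable (Function.uncurry F) (μ.prod μ) := by
    refine (integrable_prod_iff hFm).mpr ⟨?_, hnorm⟩
    rw [hμ]
    filter_upwards [ae_restrict_mem measurableSet_Ioo] with x hx
    exact hFx x hx
  have hswap := integral_integral_swap (f := F) hInt
  -- identify the LHS
  have hLHS : (∫ x in a..b, leftCaputo α a f x * (b - x) ^ (α - 1))
      = (1 / Real.Gamma (1 - α)) * ∫ x, (∫ u, F x u ∂μ) ∂μ := by
    rw [hμ, ← MeasureTheory.integral_const_mul, intervalIntegral.integral_of_le hab.le,
      integral_Ioc_eq_integral_Ioo]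
    refine setIntegral_congr_fun measurableSet_Ioo fun x hx => ?_
    rw [← hμ, hinner x hx, leftCaputo]
    have : (∫ u in a..x, h x u)
        = (∫ u in a..x, deriv f u * (x - u) ^ (-α)) * (b - x) ^ (α - 1) := by
      rw [← intervalIntegral.integral_mul_const]
    rw [this]
    ring
  -- compute the RHS
  have hRHS : (∫ u, (∫ x, F x u ∂μ) ∂μ)
      = (Real.Gamma (1 - α) * Real.Gamma α) * (f b - f a) := by
    have hgoal : (∫ u, (∫ x, F x u ∂μ) ∂μ)
        = ∫ u in Ioo a b, deriv f u * (Real.Gamma (1 - α) * Real.Gamma α) := by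
      rw [hμ]
      refine setIntegral_congr_fun measurableSet_Ioo fun u hu => ?_
      have hfun : (fun x => F x u) = (Ioi u).indicator (fun x => h x u) := by
        funext x
        rw [hF]
        simp only [Set.indicator_apply, Set.mem_Ioo, Set.mem_Ioi]
        rw [if_congr (and_iff_right hu.1) rfl rfl]
      rw [← hμ, hμ, hfun, MeasureTheory.integral_indicator measurableSet_Ioi,
        Measure.restrict_restrict measurableSet_Ioi]
      have hset : Ioi u ∩ Ioo a b = Ioo u b := by
        ext y; simp only [Set.mem_inter_iff, Set.mem_Ioi, Set.mem_Ioo]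
        constructor
        · rintro ⟨h1, _, h3⟩; exact ⟨h1, h3⟩
        · rintro ⟨h1, h2⟩; exact ⟨h1, lt_trans hu.1 h1, h2⟩
      rw [hset, ← integral_Ioc_eq_integral_Ioo, ← intervalIntegral.integral_of_le hu.2.le]
      have : (∫ x in u..b, h x u)
          = deriv f u * ∫ x in u..b, (x - u) ^ (-α) * (b - x) ^ (α - 1) := by
        rw [← intervalIntegral.integral_const_mul]
        refine intervalIntegral.integral_congr fun x hx => ?_
        rw [hh]; ring
      rw [this, hβ hu.2]
    rw [hgoal, ← integral_Ioc_eq_integral_Ioo, ← intervalIntegral.integral_of_le hab.le,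
      intervalIntegral.integral_mul_const]
    have hftc : (∫ u in a..b, deriv f u) = f b - f a := by
      refine intervalIntegral.integral_eq_sub_of_hasDerivAt (fun x hx => ?_) ?_
      · exact hdiff x (by rwa [uIcc_of_le hab.le] at hx)
      · apply ContinuousOn.intervalIntegrable
        rwa [uIcc_of_le hab.le]
    rw [hftc]; ring
  -- put everything together
  have hΓα : (0:ℝ) < Real.Gamma α := Real.Gamma_pos_of_pos hα₀
  have hΓ1α : (0:ℝ) < Real.Gamma (1 - α) := Real.Gamma_pos_of_pos (by linarith)
  rw [hLHS, hswap, hRHS]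
  field_simp
end

section
/- Let 0 < α < 1 and f be continuously differentiable on [a,b]. Then the right-sided analogue holds: (1/Γ(α)) ∫_a^b (ᶜxD^α_b f)(x) (x-a)^{α-1} dx = f(a) - f(b), where (ᶜxD^α_b f)(x) = (-1/Γ(1-α)) ∫_x^b f'(u)(u-x)^{-α} du is the right Caputo derivative. -/
open MeasureTheory intervalIntegral Real Set

/-- The right Caputo fractional derivative of order `α ∈ (0,1)`. -/
noncomputable def rightCaputo (α b : ℝ) (f : ℝ → ℝ) (x : ℝ) : ℝ :=
  (-1 / Real.Gamma (1 - α)) * ∫ u in x..b, deriv f u * (u - x) ^ (-α)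

lemma beta01 {α : ℝ} (hα₀ : 0 < α) (hα₁ : α < 1) :
    ∫ t in (0:ℝ)..1, t ^ (α - 1) * (1 - t) ^ (-α) = Real.Gamma α * Real.Gamma (1 - α) := by
  have h := Complex.Gamma_mul_Gamma_eq_betaIntegral (s := (α:ℂ)) (t := ((1-α : ℝ):ℂ))
    (by simpa using hα₀) (by simpa using sub_pos.mpr hα₁)
  rw [Complex.betaIntegral] at h
  have hcongr : ∀ t ∈ Set.uIcc (0:ℝ) 1,
      (t:ℂ) ^ ((α:ℂ) - 1) * ((1:ℂ) - t) ^ (((1-α:ℝ):ℂ) - 1)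
        = ((t ^ (α - 1) * (1 - t) ^ (-α) : ℝ) : ℂ) := by
    intro t ht
    rw [Set.uIcc_of_le (by norm_num)] at ht
    have h1 : (0:ℝ) ≤ t := ht.1
    have h2 : (0:ℝ) ≤ 1 - t := by linarith [ht.2]
    rw [show ((α:ℂ) - 1) = ((α - 1 : ℝ):ℂ) by push_cast; ring,
      show ((((1-α:ℝ)):ℂ) - 1) = ((-α : ℝ):ℂ) by push_cast; ring,
      show ((1:ℂ) - (t:ℂ)) = ((1 - t : ℝ):ℂ) by push_cast; ring,
      ← Complex.ofReal_cpow h1, ← Complex.ofReal_cpow h2, ← Complex.ofReal_mul]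
  rw [intervalIntegral.integral_congr hcongr, intervalIntegral.integral_ofReal] at h
  have hg1 : (α:ℂ) + ((1-α:ℝ):ℂ) = 1 := by push_cast; ring
  rw [hg1, Complex.Gamma_one, one_mul, Complex.Gamma_ofReal, Complex.Gamma_ofReal,
    ← Complex.ofReal_mul] at h
  exact_mod_cast h.symm

lemma beta_shift {α : ℝ} (hα₀ : 0 < α) (hα₁ : α < 1) {a u : ℝ} (h : a < u) :
    ∫ x in a..u, (x - a) ^ (α - 1) * (u - x) ^ (-α) = Real.Gamma α * Real.Gamma (1 - α) := by
  have hc : u - a ≠ 0 := by linarith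
  have hpos : (0:ℝ) < u - a := by linarith
  have key := intervalIntegral.integral_comp_mul_add
    (f := fun y => (y - a) ^ (α - 1) * (u - y) ^ (-α)) (a := (0:ℝ)) (b := 1) hc a
  simp only [mul_zero, zero_add, mul_one] at key
  rw [show u - a + a = u by ring] at key
  have hcongr : ∀ t ∈ Set.uIcc (0:ℝ) 1,
      ((u - a) * t + a - a) ^ (α - 1) * (u - ((u - a) * t + a)) ^ (-α)
        = ((u - a) ^ (α - 1) * (u - a) ^ (-α)) * (t ^ (α - 1) * (1 - t) ^ (-α)) := by
    intro t ht
    rw [Set.uIcc_of_le (by norm_num)] at ht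
    have h1 : (0:ℝ) ≤ t := ht.1
    have h2 : (0:ℝ) ≤ 1 - t := by linarith [ht.2]
    rw [show (u - a) * t + a - a = (u - a) * t by ring,
      show u - ((u - a) * t + a) = (u - a) * (1 - t) by ring,
      Real.mul_rpow hpos.le h1, Real.mul_rpow hpos.le h2]
    ring
  rw [intervalIntegral.integral_congr hcongr, intervalIntegral.integral_const_mul,
    beta01 hα₀ hα₁] at key
  rw [smul_eq_mul] at key
  have key2 : (∫ x in a..u, (x - a) ^ (α - 1) * (u - x) ^ (-α))
      = (u - a) * ((u - a) ^ (α - 1) * (u - a) ^ (-α) * (Real.Gamma α * Real.Gamma (1 - α))) := by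
    rw [key, ← mul_assoc, mul_inv_cancel₀ hc, one_mul]
  have hone : (u - a) * ((u - a) ^ (α - 1) * (u - a) ^ (-α)) = 1 := by
    rw [← Real.rpow_add hpos, show α - 1 + -α = -1 by ring, Real.rpow_neg_one]
    field_simp
  rw [key2, ← mul_assoc, hone, one_mul]

/-- Right-sided fundamental theorem of Caputo fractional calculus:
`(1/Γ(α)) ∫_a^b (ᶜxD^α_b f)(x) (x-a)^{α-1} dx = f(a) - f(b)`. -/
theorem caputo_FTC_right (α a b : ℝ) (hα₀ : 0 < α) (hα₁ : α < 1) (hab : a < b)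
    (f : ℝ → ℝ)
    (hdiff : ∀ x ∈ Set.Icc a b, HasDerivAt f (deriv f x) x)
    (hcont : ContinuousOn (deriv f) (Set.Icc a b)) :
    (1 / Real.Gamma α) * (∫ x in a..b, rightCaputo α b f x * (x - a) ^ (α - 1))
      = f a - f b := by
  have h1α : (0:ℝ) < 1 - α := by linarith
  have hΓα : Real.Gamma α ≠ 0 := (Real.Gamma_pos_of_pos hα₀).ne'
  have hΓ1α : Real.Gamma (1 - α) ≠ 0 := (Real.Gamma_pos_of_pos h1α).ne'
  obtain ⟨M, hM⟩ := isCompact_Icc.exists_bound_of_continuousOn hcont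
  have hM0 : 0 ≤ M := le_trans (norm_nonneg _) (hM a ⟨le_refl a, hab.le⟩)
  set μ : Measure ℝ := volume.restrict (Set.Ioo a b) with hμ
  set g : ℝ × ℝ → ℝ := fun p => deriv f p.2 * (p.2 - p.1) ^ (-α) * (p.1 - a) ^ (α - 1)
    with hg
  set s : Set (ℝ × ℝ) := {p : ℝ × ℝ | a < p.1 ∧ p.1 < p.2} with hs
  set G : ℝ × ℝ → ℝ := s.indicator g with hGdef
  have hsm : MeasurableSet s :=
    (measurableSet_lt measurable_const measurable_fst).inter
      (measurableSet_lt measurable_fst measurable_snd)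
  -- measurability of G
  have hGm : Measurable G := by
    have hrw : G = s.indicator (fun p => deriv f p.2 *
        Real.exp (Real.log (p.2 - p.1) * (-α)) * Real.exp (Real.log (p.1 - a) * (α - 1))) := by
      ext p
      rcases em (p ∈ s) with h | h
      · rw [hGdef, Set.indicator_of_mem h, Set.indicator_of_mem h, hg]
        obtain ⟨h1, h2⟩ := h
        dsimp only
        rw [Real.rpow_def_of_pos (by linarith : (0:ℝ) < p.2 - p.1),
          Real.rpow_def_of_pos (by simpa [sub_pos] using h1)]
      · rw [hGdef, Set.indicator_of_notMem h, Set.indicator_of_notMem h]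
    rw [hrw]
    exact Measurable.indicator
      ((((measurable_deriv f).comp measurable_snd).mul
        (((measurable_snd.sub measurable_fst).log.mul measurable_const).exp)).mul
        (((measurable_fst.sub measurable_const).log.mul measurable_const).exp)) hsm
  -- sections
  have hsec1 : ∀ x ∈ Set.Ioo a b, (fun u => G (x, u)) = (Set.Ioi x).indicator
      (fun u => deriv f u * (u - x) ^ (-α) * (x - a) ^ (α - 1)) := by
    intro x hx
    ext u
    rcases em (x < u) with h | h
    · rw [Set.indicator_of_mem (show u ∈ Set.Ioi x from h), hGdef,
        Set.indicator_of_mem (show (x, u) ∈ s from ⟨hx.1, h⟩)]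
    · rw [Set.indicator_of_notMem (show u ∉ Set.Ioi x from h), hGdef,
        Set.indicator_of_notMem (fun hc : (x, u) ∈ s => h hc.2)]
  have hsec2 : ∀ u : ℝ, (fun x => G (x, u)) = (Set.Ioo a u).indicator
      (fun x => deriv f u * (u - x) ^ (-α) * (x - a) ^ (α - 1)) := by
    intro u
    ext x
    rcases em (x ∈ Set.Ioo a u) with h | h
    · rw [Set.indicator_of_mem h, hGdef,
        Set.indicator_of_mem (show (x, u) ∈ s from ⟨h.1, h.2⟩)]
    · rw [Set.indicator_of_notMem h, hGdef,
        Set.indicator_of_notMem (fun hc : (x, u) ∈ s => h ⟨hc.1, hc.2⟩)]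
  have hIoi : ∀ x ∈ Set.Ioo a b, Set.Ioi x ∩ Set.Ioo a b = Set.Ioo x b := by
    intro x hx
    ext y
    simp only [Set.mem_inter_iff, Set.mem_Ioi, Set.mem_Ioo]
    constructor
    · rintro ⟨h1, _, h3⟩; exact ⟨h1, h3⟩
    · rintro ⟨h1, h2⟩; exact ⟨h1, lt_trans hx.1 h1, h2⟩
  have hIio : ∀ u ∈ Set.Ioo a b, Set.Ioo a u ∩ Set.Ioo a b = Set.Ioo a u := by
    intro u hu
    apply Set.inter_eq_left.mpr
    exact Set.Ioo_subset_Ioo le_rfl hu.2.le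
  -- interval integrability of the singular kernels
  have hker : ∀ x : ℝ, IntervalIntegrable (fun u => (u - x) ^ (-α)) volume x b := by
    intro x
    have h1 := intervalIntegrable_rpow' (a := 0) (b := b - x) (show (-1:ℝ) < -α by linarith)
    simpa using h1.comp_sub_right x
  have hker2 : IntervalIntegrable (fun x => (x - a) ^ (α - 1)) volume a b := by
    have h1 := intervalIntegrable_rpow' (a := 0) (b := b - a) (show (-1:ℝ) < α - 1 by linarith)
    simpa using h1.comp_sub_right a
  -- integrability of the x-sections
  have hsecInt : ∀ x ∈ Set.Ioo a b, IntervalIntegrable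
      (fun u => deriv f u * (u - x) ^ (-α) * (x - a) ^ (α - 1)) volume x b := by
    intro x hx
    apply IntervalIntegrable.mul_const
    apply (hker x).continuousOn_mul
    apply hcont.mono
    rw [Set.uIcc_of_le hx.2.le]
    exact Set.Icc_subset_Icc hx.1.le le_rfl
  have hsecInt' : ∀ x ∈ Set.Ioo a b, IntegrableOn
      (fun u => deriv f u * (u - x) ^ (-α) * (x - a) ^ (α - 1)) (Set.Ioo x b) volume := by
    intro x hx
    exact ((hsecInt x hx).1).mono_set Set.Ioo_subset_Ioc_self
  -- component 1 of integrable_prod_iff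
  have hcomp1 : ∀ᵐ x ∂μ, Integrable (fun u => G (x, u)) μ := by
    filter_upwards [ae_restrict_mem measurableSet_Ioo] with x hx
    rw [hsec1 x hx, hμ]
    rw [integrable_indicator_iff measurableSet_Ioi, IntegrableOn,
      Measure.restrict_restrict measurableSet_Ioi, hIoi x hx]
    exact hsecInt' x hx
  -- computation of the norm integral and its bound
  set C : ℝ := M * ((b - a) ^ (1 - α) / (1 - α)) with hC
  have hbound : ∀ x ∈ Set.Ioo a b, ∫ u, ‖G (x, u)‖ ∂μ ≤ C * (x - a) ^ (α - 1) := by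
    intro x hx
    have hxa : (0:ℝ) < x - a := by simpa [sub_pos] using hx.1
    have heq : ∫ u, ‖G (x, u)‖ ∂μ
        = ∫ u in Set.Ioo x b, ‖deriv f u * (u - x) ^ (-α) * (x - a) ^ (α - 1)‖ := by
      have hpt : ∀ u, G (x, u) = (Set.Ioi x).indicator
          (fun u => deriv f u * (u - x) ^ (-α) * (x - a) ^ (α - 1)) u :=
        fun u => congrFun (hsec1 x hx) u
      simp only [hpt, norm_indicator_eq_indicator_norm]
      rw [hμ, MeasureTheory.integral_indicator measurableSet_Ioi,
        Measure.restrict_restrict measurableSet_Ioi, hIoi x hx]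
    rw [heq]
    have hstep : ∫ u in Set.Ioo x b, ‖deriv f u * (u - x) ^ (-α) * (x - a) ^ (α - 1)‖
        ≤ ∫ u in Set.Ioo x b, M * ((u - x) ^ (-α) * (x - a) ^ (α - 1)) := by
      apply setIntegral_mono_on
      · exact (hsecInt' x hx).norm
      · apply Integrable.const_mul
        have : IntervalIntegrable (fun u => (u - x) ^ (-α) * (x - a) ^ (α - 1)) volume x b :=
          (hker x).mul_const _
        exact this.1.mono_set Set.Ioo_subset_Ioc_self
      · exact measurableSet_Ioo
      · intro u hu
        rw [norm_mul, norm_mul]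
        rw [Real.norm_of_nonneg (Real.rpow_nonneg (by linarith [hu.1] : (0:ℝ) ≤ u - x) _),
          Real.norm_of_nonneg (Real.rpow_nonneg hxa.le _), mul_assoc]
        apply mul_le_mul_of_nonneg_right _
          (mul_nonneg (Real.rpow_nonneg (by linarith [hu.1] : (0:ℝ) ≤ u - x) _)
            (Real.rpow_nonneg hxa.le _))
        exact hM u ⟨by linarith [hx.1, hu.1], hu.2.le⟩
    refine le_trans hstep ?_
    rw [MeasureTheory.integral_const_mul]
    have hval : ∫ u in Set.Ioo x b, (u - x) ^ (-α) * (x - a) ^ (α - 1)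
        = ((b - x) ^ (1 - α) / (1 - α)) * (x - a) ^ (α - 1) := by
      rw [MeasureTheory.integral_mul_const, ← integral_Ioc_eq_integral_Ioo,
        ← intervalIntegral.integral_of_le hx.2.le]
      congr 1
      rw [show (fun u => (u - x) ^ (-α)) = fun u => ((fun y => y ^ (-α)) (u - x)) from rfl,
        intervalIntegral.integral_comp_sub_right (fun y => y ^ (-α)) x, sub_self,
        integral_rpow (Or.inl (by linarith))]
      rw [Real.zero_rpow (by linarith : -α + 1 ≠ 0)]
      ring_nf
    rw [hval, ← mul_assoc]
    apply mul_le_mul_of_nonneg_right _ (Real.rpow_nonneg hxa.le _)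
    rw [hC]
    apply mul_le_mul_of_nonneg_left _ hM0
    apply (div_le_div_iff_of_pos_right h1α).mpr
    exact Real.rpow_le_rpow (by linarith [hx.2]) (by linarith [hx.1]) h1α.le

  -- component 2
  have hbnd_int : Integrable (fun x => C * (x - a) ^ (α - 1)) μ :=
    ((hker2.const_mul C).1).mono_set Set.Ioo_subset_Ioc_self
  have hcomp2 : Integrable (fun x => ∫ u, ‖G (x, u)‖ ∂μ) μ := by
    apply Integrable.mono' hbnd_int
    · exact (hGm.norm.aestronglyMeasurable (μ := μ.prod μ)).integral_prod_right'
    · filter_upwards [ae_restrict_mem measurableSet_Ioo] with x hx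
      rw [Real.norm_of_nonneg (integral_nonneg fun u => norm_nonneg _)]
      exact hbound x hx
  have hInt : Integrable G (μ.prod μ) :=
    (integrable_prod_iff hGm.aestronglyMeasurable).2 ⟨hcomp1, hcomp2⟩
  -- FTC for f
  have hfb : ∫ u in a..b, deriv f u = f b - f a := by
    apply intervalIntegral.integral_eq_sub_of_hasDerivAt
    · intro x hx
      exact hdiff x (by rwa [Set.uIcc_of_le hab.le] at hx)
    · exact (hcont.mono (Set.uIcc_of_le hab.le).subset).intervalIntegrable
  -- sections of the double integral
  have hXsec : ∀ x ∈ Set.Ioo a b, (∫ u, G (x, u) ∂μ)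
      = (∫ u in x..b, deriv f u * (u - x) ^ (-α)) * (x - a) ^ (α - 1) := by
    intro x hx
    rw [hsec1 x hx, hμ, MeasureTheory.integral_indicator measurableSet_Ioi,
      Measure.restrict_restrict measurableSet_Ioi, hIoi x hx,
      ← integral_Ioc_eq_integral_Ioo, ← intervalIntegral.integral_of_le hx.2.le,
      intervalIntegral.integral_mul_const]
  have hUsec : ∀ u ∈ Set.Ioo a b, (∫ x, G (x, u) ∂μ)
      = deriv f u * (Real.Gamma α * Real.Gamma (1 - α)) := by
    intro u hu
    rw [hsec2 u, hμ, MeasureTheory.integral_indicator measurableSet_Ioo,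
      Measure.restrict_restrict measurableSet_Ioo, hIio u hu,
      ← integral_Ioc_eq_integral_Ioo, ← intervalIntegral.integral_of_le hu.1.le]
    have e : ∀ x : ℝ, deriv f u * (u - x) ^ (-α) * (x - a) ^ (α - 1)
        = deriv f u * ((x - a) ^ (α - 1) * (u - x) ^ (-α)) := fun x => by ring
    simp only [e]
    rw [intervalIntegral.integral_const_mul, beta_shift hα₀ hα₁ hu.1]
  -- Fubini
  have hswap : ∫ x, (∫ u, G (x, u) ∂μ) ∂μ = ∫ u, (∫ x, G (x, u) ∂μ) ∂μ :=
    MeasureTheory.integral_integral_swap (f := fun x u => G (x, u)) hInt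
  -- left-hand side
  have hL : ∫ x in a..b, rightCaputo α b f x * (x - a) ^ (α - 1)
      = (-1 / Real.Gamma (1 - α)) * ∫ x, (∫ u, G (x, u) ∂μ) ∂μ := by
    have e1 : ∀ x : ℝ, rightCaputo α b f x * (x - a) ^ (α - 1)
        = (-1 / Real.Gamma (1 - α)) *
          ((∫ u in x..b, deriv f u * (u - x) ^ (-α)) * (x - a) ^ (α - 1)) := by
      intro x; rw [rightCaputo]; ring
    simp only [e1]
    rw [intervalIntegral.integral_const_mul]
    congr 1
    rw [intervalIntegral.integral_of_le hab.le, integral_Ioc_eq_integral_Ioo, hμ]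
    exact (setIntegral_congr_fun measurableSet_Ioo (fun x hx => (hXsec x hx).symm))
  -- right-hand side
  have hR : ∫ u, (∫ x, G (x, u) ∂μ) ∂μ
      = (f b - f a) * (Real.Gamma α * Real.Gamma (1 - α)) := by
    rw [hμ]
    rw [setIntegral_congr_fun measurableSet_Ioo (fun u hu => hUsec u hu)]
    rw [MeasureTheory.integral_mul_const, ← integral_Ioc_eq_integral_Ioo,
      ← intervalIntegral.integral_of_le hab.le, hfb]
  rw [hL, hswap, hR]
  field_simp
  ring
end
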